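/- (Linear relations among zeta-coefficients) For every integer k ≥ 1 and all integers j₁, …, j_{2k} with j₁ + ⋯ + j_{2k} = −1, one has Σ_{α=1}^{2k} (j_α − 1) · Z_{j₁, …, j_{α−1}, j_α + 1, j_{α+1}, …, j_{2k}} = 0, where Z are the symmetrized zeta-coefficients extended by zero to tuples with nonzero sum. -/

import Mathlib

open scoped BigOperators

/-- `f(n) = n (n+j₁)(n+j₁+j₂)⋯(n+j₁+⋯+j_{2k-1})`. -/
noncomputable def prodPoly (k : ℕ) (j : Fin (2 * k) → ℤ) (n : ℤ) : ℤ :=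
  ∏ m : Fin (2 * k), (n + ∑ i ∈ Finset.Iio m, j i)

/-- `N_{j₁…j_{2k}} = Σ_{n ∈ ℤ} (|f(n)| − f(n))` (a finite sum). -/
noncomputable def Ncoef (k : ℕ) (j : Fin (2 * k) → ℤ) : ℤ :=
  ∑ᶠ n : ℤ, (|prodPoly k j n| - prodPoly k j n)

/-- The symmetrized coefficients `Z_{j₁…j_{2k}}`, extended by zero to tuples
with nonzero sum. -/
noncomputable def Zcoef (k : ℕ) (j : Fin (2 * k) → ℤ) : ℚ :=
  if ∑ i, j i = 0 then
    (1 / (Nat.factorial (2 * k) : ℚ)) *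
      ∑ π : Equiv.Perm (Fin (2 * k)), (Ncoef k (j ∘ π) : ℚ)
  else 0

/- ### Auxiliary definitions -/

/-- Partial sums `S b = c 0 + ⋯ + c (b-1)`. -/
def Saux (k : ℕ) (c : Fin (2 * k) → ℤ) (b : ℕ) : ℤ :=
  ∑ i : Fin (2 * k), if (i : ℕ) < b then c i else 0

/-- The interpolating products `g b n = ∏ (n + S m + [b ≤ m])`. -/
def gaux (k : ℕ) (c : Fin (2 * k) → ℤ) (b : ℕ) (n : ℤ) : ℤ :=
  ∏ m : Fin (2 * k), (n + (Saux k c m + if b ≤ (m : ℕ) then 1 else 0))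

/-- The weighted sums used in the telescoping argument. -/
noncomputable def Vaux (k : ℕ) (c : Fin (2 * k) → ℤ) (b : ℕ) : ℤ :=
  ∑ᶠ n : ℤ, (n + Saux k c b) * (|gaux k c b n| - gaux k c b n)

/- ### Elementary lemmas -/

lemma key_scalar (u C : ℤ) :
    u * (|(u + 1) * C| - (u + 1) * C) = (u + 1) * (|u * C| - u * C) := by
  have h : u * |u + 1| = (u + 1) * |u| := by
    rcases le_or_gt 0 u with h | h
    · rw [abs_of_nonneg h, abs_of_nonneg (by omega : (0:ℤ) ≤ u + 1)]; ring
    · rw [abs_of_nonpos (by omega : u + 1 ≤ 0), abs_of_nonpos (le_of_lt h)]; ring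
  rw [abs_mul, abs_mul]
  linear_combination |C| * h

lemma support_phi_finite {N : ℕ} (hN : Even N) (a : Fin N → ℤ) :
    (Function.support fun n : ℤ => |∏ m, (n + a m)| - ∏ m, (n + a m)).Finite := by
  set B : ℤ := (∑ m, |a m|) + 1 with hB
  apply Set.Finite.subset (Set.finite_Icc (-B) B)
  intro n hn
  by_contra hmem
  apply hn
  have habs : ∀ m, |a m| ≤ ∑ m', |a m'| := fun m =>
    Finset.single_le_sum (fun i _ => abs_nonneg (a i)) (Finset.mem_univ m)
  have hP : (0:ℤ) ≤ ∏ m, (n + a m) := by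
    rcases le_or_gt n B with h1 | h1
    · have h2 : n < -B := by
        by_contra h2
        exact hmem ⟨by omega, h1⟩
      have hneg : ∀ m, -(n + a m) ≥ 0 := by
        intro m
        have h3 := habs m
        have h4 := le_abs_self (a m)
        omega
      have hrw : (∏ m, (n + a m)) = (-1) ^ N * ∏ m, (-(n + a m)) := by
        calc (∏ m, (n + a m)) = ∏ m, ((-1) * (-(n + a m))) :=
              Finset.prod_congr rfl fun m _ => by ring
          _ = (∏ _m : Fin N, (-1 : ℤ)) * ∏ m, (-(n + a m)) := Finset.prod_mul_distrib
          _ = (-1) ^ N * ∏ m, (-(n + a m)) := by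
              rw [Finset.prod_const, Finset.card_univ, Fintype.card_fin]
      rw [hrw, hN.neg_one_pow, one_mul]
      exact Finset.prod_nonneg fun m _ => hneg m
    · have hpos : ∀ m, 0 ≤ n + a m := by
        intro m
        have h3 := habs m
        have h4 := neg_abs_le (a m)
        omega
      exact Finset.prod_nonneg fun m _ => hpos m
  simp [abs_of_nonneg hP]

lemma support_g_finite (k : ℕ) (c : Fin (2 * k) → ℤ) (b : ℕ) :
    (Function.support fun n : ℤ => |gaux k c b n| - gaux k c b n).Finite := by
  simpa [gaux] using
    support_phi_finite (even_two_mul k)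
      (fun m : Fin (2 * k) => Saux k c m + if b ≤ (m : ℕ) then 1 else 0)

lemma support_wg_finite (k : ℕ) (c : Fin (2 * k) → ℤ) (b : ℕ) (t : ℤ) :
    (Function.support fun n : ℤ => (n + t) * (|gaux k c b n| - gaux k c b n)).Finite := by
  apply (support_g_finite k c b).subset
  intro n hn
  simp only [Function.mem_support] at hn ⊢
  intro h
  exact hn (by rw [h, mul_zero])

/- ### Structure lemmas for `Saux`, `gaux` -/

lemma Saux_zero (k : ℕ) (c : Fin (2 * k) → ℤ) : Saux k c 0 = 0 := by
  simp [Saux]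

lemma Saux_top (k : ℕ) (c : Fin (2 * k) → ℤ) : Saux k c (2 * k) = ∑ i, c i := by
  unfold Saux
  exact Finset.sum_congr rfl fun i _ => if_pos i.isLt

lemma Saux_Iio (k : ℕ) (c : Fin (2 * k) → ℤ) (m : Fin (2 * k)) :
    ∑ i ∈ Finset.Iio m, c i = Saux k c m := by
  calc ∑ i ∈ Finset.Iio m, c i = ∑ i ∈ Finset.univ ∩ Finset.Iio m, c i := by
        rw [Finset.univ_inter]
    _ = ∑ i : Fin (2 * k), if i ∈ Finset.Iio m then c i else 0 :=
        (Finset.sum_ite_mem _ _ _).symm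
    _ = Saux k c m := by
        unfold Saux
        refine Finset.sum_congr rfl fun i _ => ?_
        simp only [Finset.mem_Iio, Fin.lt_def]

lemma Saux_succ (k : ℕ) (c : Fin (2 * k) → ℤ) (β : Fin (2 * k)) :
    Saux k c ((β : ℕ) + 1) = Saux k c β + c β := by
  unfold Saux
  have hi : ∀ i : Fin (2 * k),
      (if (i : ℕ) < (β : ℕ) + 1 then c i else 0) =
        (if (i : ℕ) < (β : ℕ) then c i else 0) + (if i = β then c i else 0) := by
    intro i
    rcases eq_or_ne i β with rfl | hne
    · simp
    · have hv : (i : ℕ) ≠ (β : ℕ) := fun h => hne (Fin.val_injective h)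
      by_cases h : (i : ℕ) < (β : ℕ)
      · rw [if_pos (by omega), if_pos h, if_neg hne, add_zero]
      · rw [if_neg (by omega), if_neg h, if_neg hne, add_zero]
  rw [Finset.sum_congr rfl fun i _ => hi i, Finset.sum_add_distrib]
  simp

lemma prodPoly_update (k : ℕ) (c : Fin (2 * k) → ℤ) (β : Fin (2 * k)) (n : ℤ) :
    prodPoly k (Function.update c β (c β + 1)) n = gaux k c ((β : ℕ) + 1) n := by
  unfold prodPoly gaux
  refine Finset.prod_congr rfl fun m _ => ?_
  congr 1
  by_cases h : β < m
  · have hmem : β ∈ Finset.Iio m := Finset.mem_Iio.mpr h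
    have hv : (β : ℕ) < (m : ℕ) := Fin.lt_def.mp h
    rw [Finset.sum_update_of_mem hmem, Finset.sdiff_singleton_eq_erase,
      if_pos (by omega : (β : ℕ) + 1 ≤ (m : ℕ))]
    have h2 : c β + ∑ i ∈ (Finset.Iio m).erase β, c i = ∑ i ∈ Finset.Iio m, c i :=
      Finset.add_sum_erase _ c hmem
    rw [Saux_Iio] at h2
    omega
  · have hmem : β ∉ Finset.Iio m := fun hm => h (Finset.mem_Iio.mp hm)
    have hv : ¬ ((β : ℕ) < (m : ℕ)) := fun hv => h (Fin.lt_def.mpr hv)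
    rw [Finset.sum_update_of_notMem hmem, Saux_Iio,
      if_neg (by omega : ¬ ((β : ℕ) + 1 ≤ (m : ℕ)))]
    omega

lemma gaux_top (k : ℕ) (c : Fin (2 * k) → ℤ) (n : ℤ) :
    gaux k c (2 * k) n = prodPoly k c n := by
  unfold prodPoly gaux
  refine Finset.prod_congr rfl fun m _ => ?_
  rw [if_neg (by have := m.isLt; omega), Saux_Iio]
  ring

lemma gaux_zero (k : ℕ) (c : Fin (2 * k) → ℤ) (n : ℤ) :
    gaux k c 0 (n - 1) = prodPoly k c n := by
  unfold prodPoly gaux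
  refine Finset.prod_congr rfl fun m _ => ?_
  rw [if_pos (Nat.zero_le _), Saux_Iio]
  ring

/-- The key pointwise identity. -/
lemma gaux_pointwise (k : ℕ) (c : Fin (2 * k) → ℤ) (β : Fin (2 * k)) (n : ℤ) :
    (n + Saux k c β) * (|gaux k c β n| - gaux k c β n) =
      (n + Saux k c β + 1) *
        (|gaux k c ((β : ℕ) + 1) n| - gaux k c ((β : ℕ) + 1) n) := by
  set u : ℤ := n + Saux k c β with hu
  set C : ℤ := ∏ m ∈ Finset.univ.erase β,
      (n + (Saux k c m + if (β : ℕ) ≤ (m : ℕ) then 1 else 0)) with hC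
  have hCeq : (∏ m ∈ Finset.univ.erase β,
      (n + (Saux k c m + if (β : ℕ) + 1 ≤ (m : ℕ) then 1 else 0))) = C := by
    refine Finset.prod_congr rfl fun m hm => ?_
    have hne : m ≠ β := (Finset.mem_erase.mp hm).1
    have hv : (m : ℕ) ≠ (β : ℕ) := fun h => hne (Fin.val_injective h)
    by_cases h : (β : ℕ) ≤ (m : ℕ)
    · rw [if_pos (by omega), if_pos h]
    · rw [if_neg (by omega), if_neg h]
  have hg1 : gaux k c β n = (u + 1) * C := by
    unfold gaux
    rw [← Finset.mul_prod_erase _ _ (Finset.mem_univ β), if_pos (le_refl _)]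
    rw [hC, hu]; ring
  have hg2 : gaux k c ((β : ℕ) + 1) n = u * C := by
    unfold gaux
    rw [← Finset.mul_prod_erase _ _ (Finset.mem_univ β),
      if_neg (by omega : ¬ ((β : ℕ) + 1 ≤ (β : ℕ))), hCeq]
    rw [hu]; ring
  rw [hg1, hg2]
  exact key_scalar u C

/-- The telescoping step. -/
lemma Vaux_step (k : ℕ) (c : Fin (2 * k) → ℤ) (β : Fin (2 * k)) :
    (c β - 1) * Ncoef k (Function.update c β (c β + 1)) =
      Vaux k c ((β : ℕ) + 1) - Vaux k c (β : ℕ) := by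
  have hN : Ncoef k (Function.update c β (c β + 1)) =
      ∑ᶠ n : ℤ, (|gaux k c ((β : ℕ) + 1) n| - gaux k c ((β : ℕ) + 1) n) := by
    unfold Ncoef
    exact finsum_congr fun n => by rw [prodPoly_update]
  have hV : Vaux k c (β : ℕ) =
      ∑ᶠ n : ℤ, (n + Saux k c β + 1) *
        (|gaux k c ((β : ℕ) + 1) n| - gaux k c ((β : ℕ) + 1) n) := by
    unfold Vaux
    exact finsum_congr fun n => gaux_pointwise k c β n
  have hsupf : (Function.support fun n : ℤ => (n + Saux k c ((β : ℕ) + 1)) *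
      (|gaux k c ((β : ℕ) + 1) n| - gaux k c ((β : ℕ) + 1) n)).Finite :=
    support_wg_finite k c _ _
  have hsupg : (Function.support fun n : ℤ => (n + Saux k c β + 1) *
      (|gaux k c ((β : ℕ) + 1) n| - gaux k c ((β : ℕ) + 1) n)).Finite := by
    have := support_wg_finite k c ((β : ℕ) + 1) (Saux k c β + 1)
    simpa [add_assoc] using this
  rw [hV, hN]
  show _ = Vaux k c ((β : ℕ) + 1) - _
  unfold Vaux
  rw [← finsum_sub_distrib hsupf hsupg,
    mul_finsum _ _]
  refine finsum_congr fun n => ?_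
  have hs := Saux_succ k c β
  rw [hs]
  ring

/-- The unsymmetrized linear relation, for any ordered tuple with sum `-1`. -/
lemma Ncoef_linear (k : ℕ) (c : Fin (2 * k) → ℤ) (hc : ∑ i, c i = -1) :
    ∑ β : Fin (2 * k), (c β - 1) * Ncoef k (Function.update c β (c β + 1)) = 0 := by
  have h1 : ∑ β : Fin (2 * k), (c β - 1) * Ncoef k (Function.update c β (c β + 1)) =
      ∑ β : Fin (2 * k), (Vaux k c ((β : ℕ) + 1) - Vaux k c (β : ℕ)) :=
    Finset.sum_congr rfl fun β _ => Vaux_step k c β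
  rw [h1]
  rw [Fin.sum_univ_eq_sum_range (fun b => Vaux k c (b + 1) - Vaux k c b) (2 * k)]
  rw [Finset.sum_range_sub (fun b => Vaux k c b)]
  -- now show Vaux k c (2*k) = Vaux k c 0
  have htop : Vaux k c (2 * k) =
      ∑ᶠ n : ℤ, (n - 1) * (|prodPoly k c n| - prodPoly k c n) := by
    unfold Vaux
    refine finsum_congr fun n => ?_
    rw [gaux_top, Saux_top, hc]
    ring_nf
  have hzero : Vaux k c 0 =
      ∑ᶠ n : ℤ, (n + 1 - 1) * (|prodPoly k c (n + 1)| - prodPoly k c (n + 1)) := by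
    unfold Vaux
    refine finsum_congr fun n => ?_
    have := gaux_zero k c (n + 1)
    rw [show n + 1 - 1 = n by ring] at this
    rw [this, Saux_zero]
    ring_nf
  have hshift : (∑ᶠ n : ℤ, (n + 1 - 1) * (|prodPoly k c (n + 1)| - prodPoly k c (n + 1))) =
      ∑ᶠ n : ℤ, (n - 1) * (|prodPoly k c n| - prodPoly k c n) := by
    exact finsum_comp_equiv (Equiv.addRight (1 : ℤ))
      (f := fun n : ℤ => (n - 1) * (|prodPoly k c n| - prodPoly k c n))
  rw [htop, hzero, hshift, sub_self]

/-- Linear relations among zeta-coefficients: for `j₁ + ⋯ + j_{2k} = −1`,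
`Σ_{α=1}^{2k} (j_α − 1) Z_{j₁,…,j_{α−1}, j_α+1, j_{α+1},…, j_{2k}} = 0`. -/
theorem Zcoef_linear_relations (k : ℕ) (hk : 1 ≤ k) (j : Fin (2 * k) → ℤ)
    (hj : ∑ i, j i = -1) :
    ∑ α : Fin (2 * k),
      ((j α : ℚ) - 1) * Zcoef k (Function.update j α (j α + 1)) = 0 := by
  have hupdate : ∀ α : Fin (2 * k), ∑ i, Function.update j α (j α + 1) i = 0 := by
    intro α
    rw [Finset.sum_update_of_mem (Finset.mem_univ α), Finset.sdiff_singleton_eq_erase]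
    have h2 : j α + ∑ i ∈ Finset.univ.erase α, j i = ∑ i, j i :=
      Finset.add_sum_erase _ j (Finset.mem_univ α)
    omega
  have hπ : ∀ π : Equiv.Perm (Fin (2 * k)),
      ∑ α : Fin (2 * k), ((j α : ℚ) - 1) *
        (Ncoef k (Function.update j α (j α + 1) ∘ π) : ℚ) = 0 := by
    intro π
    have hc : ∑ i, (j ∘ π) i = -1 := by
      rw [show ∑ i, (j ∘ π) i = ∑ i, j (π i) from rfl, Equiv.sum_comp π j]
      exact hj
    have hz := Ncoef_linear k (j ∘ π) hc
    have hzq : ∑ β : Fin (2 * k), (((j ∘ π) β : ℚ) - 1) *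
        (Ncoef k (Function.update (j ∘ π) β ((j ∘ π) β + 1)) : ℚ) = 0 := by
      exact_mod_cast hz
    calc ∑ α : Fin (2 * k), ((j α : ℚ) - 1) *
          (Ncoef k (Function.update j α (j α + 1) ∘ π) : ℚ)
        = ∑ β : Fin (2 * k), ((j (π β) : ℚ) - 1) *
          (Ncoef k (Function.update j (π β) (j (π β) + 1) ∘ π) : ℚ) :=
          (Equiv.sum_comp π fun α => ((j α : ℚ) - 1) *
            (Ncoef k (Function.update j α (j α + 1) ∘ π) : ℚ)).symm
      _ = ∑ β : Fin (2 * k), (((j ∘ π) β : ℚ) - 1) *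
          (Ncoef k (Function.update (j ∘ π) β ((j ∘ π) β + 1)) : ℚ) := by
          refine Finset.sum_congr rfl fun β _ => ?_
          rw [Function.update_comp_equiv j π (π β) (j (π β) + 1), Equiv.symm_apply_apply]
          rfl
      _ = 0 := hzq
  calc ∑ α : Fin (2 * k), ((j α : ℚ) - 1) * Zcoef k (Function.update j α (j α + 1))
      = ∑ α : Fin (2 * k), (1 / (Nat.factorial (2 * k) : ℚ)) *
          ∑ π : Equiv.Perm (Fin (2 * k)), ((j α : ℚ) - 1) *
            (Ncoef k (Function.update j α (j α + 1) ∘ π) : ℚ) := by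
        refine Finset.sum_congr rfl fun α _ => ?_
        rw [Zcoef, if_pos (hupdate α)]
        simp only [Finset.mul_sum]
        refine Finset.sum_congr rfl fun π _ => ?_
        ring
    _ = (1 / (Nat.factorial (2 * k) : ℚ)) *
          ∑ π : Equiv.Perm (Fin (2 * k)), ∑ α : Fin (2 * k), ((j α : ℚ) - 1) *
            (Ncoef k (Function.update j α (j α + 1) ∘ π) : ℚ) := by
        rw [← Finset.mul_sum, Finset.sum_comm]
    _ = 0 := by
        rw [Finset.sum_congr rfl fun π _ => hπ π]
        simp
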